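/- Let w be a square-free C_3-word over {0,1,2} (in fact every square-free word over {0,1,2} is a C_3-word, since any two distinct letters are adjacent in C_3). Form w' over {0,1,2,3} by inserting the letter 3 between every adjacent pair (0,2) and (2,0) in w. Then w' is a square-free C_4-word, where C_4 has edges {0,1},{1,2},{2,3},{3,0}. -/

import Mathlib

def SqFree {α : Type*} (w : List α) : Prop :=
  ∀ u : List α, u ≠ [] → ¬ (u ++ u) <:+: w

/-- Adjacency in the cycle `C₄` on `{0,1,2,3}` with edges `01`, `12`, `23`, `30`. -/
def C4Adj (a b : Fin 4) : Prop := (a.val + 1) % 4 = b.val ∨ (b.val + 1) % 4 = a.val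

/-- Insert the letter `3` between every adjacent pair `(0,2)` and `(2,0)`. -/
def ins : List (Fin 3) → List (Fin 4)
  | [] => []
  | [a] => [Fin.castSucc a]
  | a :: b :: t =>
    if (a = 0 ∧ b = 2) ∨ (a = 2 ∧ b = 0) then
      Fin.castSucc a :: 3 :: ins (b :: t)
    else
      Fin.castSucc a :: ins (b :: t)

/-- Deletion map: remove the letter `3`, casting the rest back to `Fin 3`. -/
def del (l : List (Fin 4)) : List (Fin 3) :=
  l.filterMap (fun x => if h : x.val < 3 then some ⟨x.val, h⟩ else none)

lemma del_append (a b : List (Fin 4)) : del (a ++ b) = del a ++ del b :=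
  List.filterMap_append ..

lemma del_cons3 (l : List (Fin 4)) : del ((3 : Fin 4) :: l) = del l := by
  simp [del, List.filterMap_cons, show ¬((3 : Fin 4).val < 3) by decide]

lemma del_cons_cast (a : Fin 3) (l : List (Fin 4)) :
    del (Fin.castSucc a :: l) = a :: del l := by
  simp [del, List.filterMap_cons, Fin.castSucc, a.isLt]

lemma del_ins : ∀ w : List (Fin 3), del (ins w) = w
  | [] => by simp [ins, del]
  | [a] => by
    have := del_cons_cast a []
    simpa [ins, del] using this
  | a :: b :: t => by
    have ih := del_ins (b :: t)
    by_cases hc : (a = 0 ∧ b = 2) ∨ (a = 2 ∧ b = 0)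
    · rw [ins, if_pos hc, del_cons_cast, del_cons3, ih]
    · rw [ins, if_neg hc, del_cons_cast, ih]

lemma ins_head : ∀ (b : Fin 3) (t : List (Fin 3)),
    (ins (b :: t)).head? = some (Fin.castSucc b)
  | b, [] => by simp [ins]
  | b, c :: t => by
    by_cases hc : (b = 0 ∧ c = 2) ∨ (b = 2 ∧ c = 0)
    · rw [ins, if_pos hc]; rfl
    · rw [ins, if_neg hc]; rfl

lemma chain_ins : ∀ w : List (Fin 3), w.Chain' Ne → (ins w).Chain' C4Adj
  | [] => by simp [ins, List.Chain']
  | [a] => by simp [ins, List.Chain']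
  | a :: b :: t => by
    intro h
    rw [List.Chain', List.isChain_cons_cons] at h
    obtain ⟨hab, ht⟩ := h
    have ih := chain_ins (b :: t) ht
    have hh := ins_head b t
    by_cases hc : (a = 0 ∧ b = 2) ∨ (a = 2 ∧ b = 0)
    · rw [ins, if_pos hc]
      rw [List.Chain', List.isChain_cons_cons]
      constructor
      · rcases hc with ⟨rfl, rfl⟩ | ⟨rfl, rfl⟩ <;> unfold C4Adj <;> decide
      · rw [List.isChain_cons]
        refine ⟨?_, ih⟩
        intro y hy
        rw [hh, Option.mem_def, Option.some_inj] at hy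
        subst hy
        rcases hc with ⟨rfl, rfl⟩ | ⟨rfl, rfl⟩ <;> unfold C4Adj <;> decide
    · rw [ins, if_neg hc]
      rw [List.Chain', List.isChain_cons]
      refine ⟨?_, ih⟩
      intro y hy
      rw [hh, Option.mem_def, Option.some_inj] at hy
      subst hy
      fin_cases a <;> fin_cases b <;> simp_all [C4Adj] <;> decide

lemma sqfree_chain_ne {α : Type*} (w : List α) (hw : SqFree w) : w.Chain' Ne := by
  induction w with
  | nil => simp [List.Chain']
  | cons a t ih =>
    rw [List.Chain', List.isChain_cons]
    constructor
    · intro y hy hay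
      cases t with
      | nil => simp at hy
      | cons b t' =>
        rw [List.head?_cons, Option.mem_def, Option.some_inj] at hy
        subst hy
        subst hay
        exact hw [a] (by simp) ⟨[], t', by simp⟩
    · apply ih
      intro u hu hinf
      exact hw u hu (hinf.trans (List.suffix_cons a t).isInfix)

theorem ins_squarefree_C4_word (w : List (Fin 3)) (hw : SqFree w) :
    (ins w).Chain' C4Adj ∧ SqFree (ins w) := by
  have hchain : (ins w).Chain' C4Adj := chain_ins w (sqfree_chain_ne w hw)
  refine ⟨hchain, ?_⟩
  intro u hu hinf
  by_cases hdel : del u = []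
  · -- all letters of u are 3, so [3,3] is an infix of ins w
    have h3 : ∀ x ∈ u, x = (3 : Fin 4) := by
      intro x hx
      have := List.filterMap_eq_nil_iff.mp hdel x hx
      simp only [dite_eq_right_iff] at this
      fin_cases x <;> simp_all <;> exact absurd (this (by norm_num)) (by simp)
    have hpre : [(3 : Fin 4), 3] <+: u ++ u := by
      cases u with
      | nil => exact absurd rfl hu
      | cons x rest =>
        have hx3 := h3 x (by simp)
        subst hx3
        cases rest with
        | nil => simp
        | cons y r2 =>
          have hy3 := h3 y (by simp)
          subst hy3
          exact ⟨r2 ++ (3 :: 3 :: r2), by simp⟩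
    have h33 : [(3 : Fin 4), 3] <:+: ins w := hpre.isInfix.trans hinf
    have := hchain.infix h33
    rw [List.isChain_cons_cons] at this
    exact absurd this.1 (by unfold C4Adj; decide)
  · -- project the square down to w
    obtain ⟨s, t, hst⟩ := hinf
    have : del s ++ (del u ++ del u) ++ del t = w := by
      rw [← del_append, ← del_append, ← del_append, hst, del_ins]
    exact hw (del u) hdel ⟨del s, del t, this⟩
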